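/- Let L be a finite atomistic lattice such that there is no pair of join-irreducible elements a, b with a D b and b D a. If L embeds into Co(P) for some poset P, then L embeds into Co(Q) for some poset Q of length at most 2; in particular, L then has no D-cycle at all (no finite sequence p_0 D p_1 D ⋯ D p_{k-1} D p_0 of join-irreducible elements). -/

import Mathlib

/-! Common definitions: lattices of order-convex subsets of a poset,
length of a poset, the identities (S), (U), (B), (L2), (H_n), (H_{m,n}),
join-irreducibility, the join-dependency relation, join-seeds,
the posets P_{I,J}, tree-like posets, D-closed sets,
and complete lattice congruences. -/

open Set

/-- The lattice `Co P` of all order-convex subsets of a poset `P`. -/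
def Co (P : Type*) [PartialOrder P] : Type _ := {s : Set P // s.OrdConnected}

namespace Co

variable {P : Type*} [PartialOrder P]

instance : PartialOrder (Co P) := Subtype.partialOrder _

instance : InfSet (Co P) :=
  ⟨fun S => ⟨⋂ s ∈ S, s.1, Set.ordConnected_biInter fun s _ => s.2⟩⟩

noncomputable instance : CompleteLattice (Co P) :=
  completeLatticeOfInf (Co P) (by
    intro S
    constructor
    · intro t ht
      exact Set.biInter_subset_of_mem (t := fun s => s.1) ht
    · intro b hb
      exact Set.subset_iInter₂ fun t ht => hb ht)

/-- The order-convex subset of `P` with underlying set `X`. -/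
def mk' (X : Set P) (hX : X.OrdConnected) : Co P := ⟨X, hX⟩

/-- The singleton `{p}`, as an order-convex set. -/
def sngl (p : P) : Co P := ⟨{p}, Set.ordConnected_singleton⟩

/-- The empty order-convex set. -/
def emp : Co P := ⟨∅, Set.ordConnected_empty⟩

end Co

/-- `lengthLE P n` states that the poset `P` has length at most `n`, that is,
every finite chain of `P` has at most `n + 1` elements. -/
def lengthLE (P : Type*) [PartialOrder P] (n : ℕ) : Prop :=
  ∀ C : Finset P, IsChain (· ≤ ·) (C : Set P) → C.card ≤ n + 1

section Identities

/-- The Stirlitz identity (S). -/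
def IdS (L : Type*) [Lattice L] : Prop :=
  ∀ a b b₀ b₁ c : L,
    a ⊓ ((b ⊓ (b₀ ⊔ b₁)) ⊔ c) =
      (a ⊓ (b ⊓ (b₀ ⊔ b₁)))
      ⊔ (a ⊓ (b₀ ⊔ c) ⊓ ((b ⊓ (b₀ ⊔ b₁) ⊓ (a ⊔ b₀)) ⊔ c))
      ⊔ (a ⊓ (b₁ ⊔ c) ⊓ ((b ⊓ (b₀ ⊔ b₁) ⊓ (a ⊔ b₁)) ⊔ c))

/-- The Udav identity (U). -/
def IdU (L : Type*) [Lattice L] : Prop :=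
  ∀ x x₀ x₁ x₂ : L,
    x ⊓ (x₀ ⊔ x₁) ⊓ (x₁ ⊔ x₂) ⊓ (x₀ ⊔ x₂) =
      (x ⊓ x₀ ⊓ (x₁ ⊔ x₂)) ⊔ (x ⊓ x₁ ⊓ (x₀ ⊔ x₂)) ⊔ (x ⊓ x₂ ⊓ (x₀ ⊔ x₁))

/-- The Bond identity (B). -/
def IdB (L : Type*) [Lattice L] : Prop :=
  ∀ x a₀ a₁ b₀ b₁ : L,
    x ⊓ (a₀ ⊔ a₁) ⊓ (b₀ ⊔ b₁) =
      (x ⊓ a₀ ⊓ (b₀ ⊔ b₁)) ⊔ (x ⊓ a₁ ⊓ (b₀ ⊔ b₁))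
      ⊔ (x ⊓ b₀ ⊓ (a₀ ⊔ a₁)) ⊔ (x ⊓ b₁ ⊓ (a₀ ⊔ a₁))
      ⊔ (x ⊓ (a₀ ⊔ a₁) ⊓ (b₀ ⊔ b₁) ⊓ (a₀ ⊔ b₀) ⊓ (a₁ ⊔ b₁))
      ⊔ (x ⊓ (a₀ ⊔ a₁) ⊓ (b₀ ⊔ b₁) ⊓ (a₀ ⊔ b₁) ⊓ (a₁ ⊔ b₀))

/-- The identity (L₂). -/
def IdL2 (L : Type*) [Lattice L] : Prop :=
  ∀ a b b' c c' : L,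
    a ⊓ ((b ⊓ (c ⊔ c')) ⊔ b') =
      (a ⊓ b ⊓ (c ⊔ c')) ⊔ (a ⊓ ((b ⊓ c) ⊔ b')) ⊔ (a ⊓ ((b ⊓ c') ⊔ b'))

variable {L : Type*} [Lattice L]

/-- The lattice polynomial `U_{i,n}` (in the variables `x₀, …, xₙ, x'₁, …, x'ₙ`). -/
def Upoly (x x' : ℕ → L) (n : ℕ) (i : ℕ) : L :=
  if h : n ≤ i then x n
  else x i ⊓ (Upoly x x' n (i + 1) ⊔ x' (i + 1))
  termination_by n - i
  decreasing_by omega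

/-- The lattice polynomial `V_{i,j,n}`. -/
def Vpoly (x x' : ℕ → L) (n i : ℕ) (j : ℕ) : L :=
  if h : i ≤ j then (x i ⊓ Upoly x x' n (i + 1)) ⊔ (x i ⊓ x' (i + 1))
  else x j ⊓ (Vpoly x x' n i (j + 1) ⊔ x' (j + 1))
  termination_by i - j
  decreasing_by omega

/-- The lattice polynomial `W_{i,j,n}`. -/
def Wpoly (x x' : ℕ → L) (n i : ℕ) (j : ℕ) : L :=
  if h : i ≤ j then
    x i ⊓ (x' (i + 1) ⊔ x' (i + 2)) ⊓ ((Upoly x x' n (i + 1) ⊓ (x i ⊔ x' (i + 2))) ⊔ x' (i + 1))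
  else x j ⊓ (Wpoly x x' n i (j + 1) ⊔ x' (j + 1))
  termination_by i - j
  decreasing_by omega

/-- `bigJoin f k = f 0 ⊔ f 1 ⊔ ⋯ ⊔ f k`. -/
def bigJoin (f : ℕ → L) : ℕ → L
  | 0 => f 0
  | k + 1 => bigJoin f k ⊔ f (k + 1)

end Identities

/-- The identity (Hₙ) : `Uₙ = ⋁_{0 ≤ i ≤ n-1} V_{i,n} ∨ ⋁_{0 ≤ i ≤ n-2} W_{i,n}`
(intended for `n ≥ 1`). -/
def IdH (n : ℕ) (L : Type*) [Lattice L] : Prop :=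
  ∀ x x' : ℕ → L,
    Upoly x x' n 0 =
      bigJoin (fun i =>
        if i + 2 ≤ n then Vpoly x x' n i 0 ⊔ Wpoly x x' n i 0 else Vpoly x x' n i 0) (n - 1)

/-- The identity (H_{m,n}) (intended for `m, n ≥ 1`); the common base point is
`x 0 = y 0 = t`. -/
def IdHmn (m n : ℕ) (L : Type*) [Lattice L] : Prop :=
  ∀ x x' y y' : ℕ → L, x 0 = y 0 →
    Upoly x x' m 0 ⊓ Upoly y y' n 0 =
      bigJoin (fun i =>
          if i + 2 ≤ m then
            (Vpoly x x' m i 0 ⊓ Upoly y y' n 0) ⊔ (Wpoly x x' m i 0 ⊓ Upoly y y' n 0)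
          else Vpoly x x' m i 0 ⊓ Upoly y y' n 0) (m - 1)
      ⊔ bigJoin (fun j =>
          if j + 2 ≤ n then
            (Upoly x x' m 0 ⊓ Vpoly y y' n j 0) ⊔ (Upoly x x' m 0 ⊓ Wpoly y y' n j 0)
          else Upoly x x' m 0 ⊓ Vpoly y y' n j 0) (n - 1)
      ⊔ (Upoly x x' m 0 ⊓ Upoly y y' n 0 ⊓ (x 1 ⊔ y' 1) ⊓ (x' 1 ⊔ y 1))

/-- `p` is join-irreducible: `p = x ⊔ y` implies `p = x` or `p = y`. -/
def JIrr {L : Type*} [Lattice L] (p : L) : Prop :=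
  ∀ x y : L, p = x ⊔ y → p = x ∨ p = y

/-- The join-dependency relation `p D q`. -/
def DRel {L : Type*} [Lattice L] (p q : L) : Prop :=
  p ≠ q ∧ ∃ x : L, p ≤ q ⊔ x ∧ ∀ y < q, ¬ p ≤ y ⊔ x

/-- A subset `S` of a lattice `L` is a join-seed. -/
def JoinSeed (L : Type*) [Lattice L] (S : Set L) : Prop :=
  (∀ p ∈ S, JIrr p) ∧
  (∀ a : L, ∃ T ⊆ S, IsLUB T a) ∧
  (∀ p ∈ S, ∀ a b : L, p ≤ a ⊔ b → ¬ p ≤ a → ¬ p ≤ b →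
    ∃ x ∈ S, ∃ y ∈ S, x ≤ a ∧ y ≤ b ∧ p ≤ x ⊔ y ∧
      (∀ x' < x, ¬ p ≤ x' ⊔ y) ∧ (∀ y' < y, ¬ p ≤ x ⊔ y'))

/-- The poset `P_{I,J} = I ∪ {p} ∪ J`, where every element of `I` is below `p`,
`p` is below every element of `J`, every element of `I` is below every element
of `J`, and there are no other strict comparabilities. -/
def PIJ (I J : Type*) : Type _ := I ⊕ (Unit ⊕ J)

namespace PIJ

variable {I J : Type*}

/-- The rank (height) of an element of `P_{I,J}`. -/
def rank (a : PIJ I J) : ℕ :=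
  Sum.elim (fun _ => 0) (Sum.elim (fun _ => 1) fun _ => 2) a

instance : PartialOrder (PIJ I J) where
  le a b := a = b ∨ rank a < rank b
  le_refl a := Or.inl rfl
  le_trans a b c hab hbc := by
    rcases hab with rfl | h
    · exact hbc
    · rcases hbc with rfl | h'
      · exact Or.inr h
      · exact Or.inr (h.trans h')
  le_antisymm a b hab hba := by
    rcases hab with rfl | h
    · rfl
    · rcases hba with rfl | h'
      · rfl
      · omega

end PIJ

/-- A poset is tree-like if it has no infinite bounded chain and between any two
points there is at most one repetition-free finite path with respect to the
covering relation. -/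
def TreeLike (P : Type*) [PartialOrder P] : Prop :=
  (∀ C : Set P, IsChain (· ≤ ·) C → BddAbove C → BddBelow C → C.Finite) ∧
  (∀ a b : P, ∀ l₁ l₂ : List P,
    l₁.Nodup → l₁.head? = some a → l₁.getLast? = some b →
      l₁.Chain' (fun u v => u ⋖ v ∨ v ⋖ u) →
    l₂.Nodup → l₂.head? = some a → l₂.getLast? = some b →
      l₂.Chain' (fun u v => u ⋖ v ∨ v ⋖ u) →
    l₁ = l₂)

/-- A subset `U` of a poset `P` is `D`-closed. -/
def DClosed {P : Type*} [PartialOrder P] (U : Set P) : Prop :=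
  ∀ x p y : P, x < p → p < y → (x ∈ U ∨ y ∈ U) → p ∈ U

/-- A complete congruence of a complete lattice. -/
structure IsCompleteCongr {L : Type*} [CompleteLattice L] (θ : L → L → Prop) : Prop where
  refl : ∀ x, θ x x
  symm : ∀ {x y}, θ x y → θ y x
  trans : ∀ {x y z}, θ x y → θ y z → θ x z
  sup : ∀ {a b c d}, θ a b → θ c d → θ (a ⊔ c) (b ⊔ d)
  inf : ∀ {a b c d}, θ a b → θ c d → θ (a ⊓ c) (b ⊓ d)
  cSup : ∀ (x : L) (Y : Set L), Y.Nonempty → (∀ y ∈ Y, θ x y) → θ x (sSup Y)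
  cInf : ∀ (x : L) (Y : Set L), Y.Nonempty → (∀ y ∈ Y, θ x y) → θ x (sInf Y)

/-- The map `h_U : Co(P) → Co(P ∖ U)`, `X ↦ X ∖ U`. -/
def coRestrict {P : Type*} [PartialOrder P] (U : Set P) (X : Co P) :
    Co {p : P // p ∉ U} :=
  ⟨Subtype.val ⁻¹' X.1, by
    constructor
    rintro a ha b hb z hz
    exact X.2.out ha hb ⟨hz.1, hz.2⟩⟩

/-- The lattice `D(P)` of all `D`-closed subsets of a poset `P`. -/
def DSub (P : Type*) [PartialOrder P] : Type _ := {U : Set P // DClosed U}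

namespace DSub

variable {P : Type*} [PartialOrder P]

instance : PartialOrder (DSub P) := Subtype.partialOrder _

instance : InfSet (DSub P) :=
  ⟨fun S => ⟨⋂ U ∈ S, U.1, by
    intro x p y h1 h2 h3
    simp only [Set.mem_iInter] at h3 ⊢
    intro U hU
    exact U.2 x p y h1 h2 (h3.imp (fun h => h U hU) fun h => h U hU)⟩⟩

noncomputable instance : CompleteLattice (DSub P) :=
  completeLatticeOfInf (DSub P) (by
    intro S
    constructor
    · intro t ht
      exact Set.biInter_subset_of_mem (t := fun U => U.1) ht
    · intro b hb
      exact Set.subset_iInter₂ fun t ht => hb ht)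

end DSub

set_option linter.unusedSectionVars false
set_option maxHeartbeats 1000000
namespace Stmt6A
variable {P : Type*} [PartialOrder P]

theorem co_le_iff (X Y : Co P) : X ≤ Y ↔ X.1 ⊆ Y.1 := Iff.rfl

theorem co_inf_carrier (X Y : Co P) : (X ⊓ Y).1 = X.1 ∩ Y.1 := by
  apply subset_antisymm
  · exact subset_inter ((co_le_iff _ _).1 inf_le_left) ((co_le_iff _ _).1 inf_le_right)
  · have : (⟨X.1 ∩ Y.1, X.2.inter Y.2⟩ : Co P) ≤ X ⊓ Y :=
      le_inf (α := Co P) ((co_le_iff _ _).2 (inter_subset_left)) ((co_le_iff _ _).2 (inter_subset_right))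
    exact (co_le_iff _ _).1 this

theorem hullConv (A : Set P) :
    OrdConnected {z : P | ∃ p ∈ A, ∃ q ∈ A, p ≤ z ∧ z ≤ q} := by
  constructor
  rintro a ⟨p, hp, q, hq, hpa, haq⟩ b ⟨p', hp', q', hq', hpb, hbq⟩ z hz
  exact ⟨p, hp, q', hq', hpa.trans hz.1, hz.2.trans hbq⟩

theorem co_sup_carrier (X Y : Co P) :
    (X ⊔ Y).1 = {z : P | ∃ p ∈ X.1 ∪ Y.1, ∃ q ∈ X.1 ∪ Y.1, p ≤ z ∧ z ≤ q} := by
  apply subset_antisymm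
  · have : X ⊔ Y ≤ ⟨_, hullConv (X.1 ∪ Y.1)⟩ := by
      apply sup_le
      · exact fun z hz => ⟨z, Or.inl hz, z, Or.inl hz, le_refl z, le_refl z⟩
      · exact fun z hz => ⟨z, Or.inr hz, z, Or.inr hz, le_refl z, le_refl z⟩
    exact (co_le_iff _ _).1 this
  · rintro z ⟨p, hp, q, hq, hpz, hzq⟩
    have hsub : X.1 ∪ Y.1 ⊆ (X ⊔ Y).1 :=
      union_subset ((co_le_iff _ _).1 le_sup_left) ((co_le_iff _ _).1 le_sup_right)
    exact (X ⊔ Y).2.out (hsub hp) (hsub hq) ⟨hpz, hzq⟩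


section Hom
variable {L : Type*} [Lattice L] [OrderBot L] (f : LatticeHom L (Co P))

theorem Fmono {x y : L} (h : x ≤ y) : (f x).1 ⊆ (f y).1 := by
  have : f x ⊔ f y = f y := by rw [← map_sup, sup_eq_right.2 h]
  exact (co_le_iff _ _).1 (this ▸ le_sup_left)

theorem Fbot (a : L) : (f ⊥).1 ⊆ (f a).1 := Fmono f bot_le

/-- support of an atom is nonempty -/
theorem Sne (hf : Function.Injective f) {a : L} (ha : IsAtom a) :
    ∃ r, r ∈ (f a).1 \ (f ⊥).1 := by
  by_contra h
  push_neg at h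
  have h1 : (f a).1 = (f ⊥).1 := subset_antisymm (fun p hp => by
    by_contra hc; exact (h p ⟨hp, hc⟩)) (Fbot f a)
  exact ha.1 (hf (Subtype.ext h1))

/-- atom meet trick -/
theorem atomLe {a x : L} (ha : IsAtom a) {p : P}
    (hp : p ∈ (f a).1) (hpx : p ∈ (f x).1) (hpb : p ∉ (f ⊥).1) : a ≤ x := by
  rcases lt_or_eq_of_le (inf_le_left : a ⊓ x ≤ a) with h | h
  · exfalso
    have hb : a ⊓ x = ⊥ := ha.2 _ h
    have : p ∈ (f (a ⊓ x)).1 := by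
      rw [map_inf, co_inf_carrier]; exact ⟨hp, hpx⟩
    rw [hb] at this
    exact hpb this
  · exact inf_eq_left.1 h

theorem atomLeAtom {a b : L} (ha : IsAtom a) (hb : IsAtom b) (h : a ≤ b) : a = b := by
  rcases lt_or_eq_of_le h with h' | h'
  · exact absurd (hb.2 _ h') ha.1
  · exact h'

/-- refinement along a finite sup -/
theorem refineFinset (T : Finset L) :
    ∀ p ∈ (f (T.sup id)).1,
      (∃ u, u ≤ p ∧ (u ∈ (f ⊥).1 ∨ ∃ a ∈ T, u ∈ (f a).1)) ∧
      (∃ v, p ≤ v ∧ (v ∈ (f ⊥).1 ∨ ∃ a ∈ T, v ∈ (f a).1)) := by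
  classical
  induction T using Finset.induction_on with
  | empty =>
    intro p hp
    simp only [Finset.sup_empty] at hp
    exact ⟨⟨p, le_refl p, Or.inl hp⟩, ⟨p, le_refl p, Or.inl hp⟩⟩
  | @insert a T ha ih =>
    intro p hp
    rw [Finset.sup_insert, map_sup, co_sup_carrier] at hp
    obtain ⟨u₀, hu₀, v₀, hv₀, hup, hpv⟩ := hp
    constructor
    · rcases hu₀ with h | h
      · exact ⟨u₀, hup, Or.inr ⟨a, Finset.mem_insert_self a T, h⟩⟩
      · obtain ⟨⟨u, huu, hmem⟩, -⟩ := ih u₀ h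
        exact ⟨u, huu.trans hup, hmem.imp id (fun ⟨b, hb, hm⟩ =>
          ⟨b, Finset.mem_insert_of_mem hb, hm⟩)⟩
    · rcases hv₀ with h | h
      · exact ⟨v₀, hpv, Or.inr ⟨a, Finset.mem_insert_self a T, h⟩⟩
      · obtain ⟨-, ⟨v, hvv, hmem⟩⟩ := ih v₀ h
        exact ⟨v, hpv.trans hvv, hmem.imp id (fun ⟨b, hb, hm⟩ =>
          ⟨b, Finset.mem_insert_of_mem hb, hm⟩)⟩


theorem atomsSup [Finite L] (hatom : ∀ a : L, IsLUB {x : L | IsAtom x ∧ x ≤ a} a) (x : L) :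
    ((Set.toFinite {a : L | IsAtom a ∧ a ≤ x}).toFinset).sup id = x := by
  classical
  apply le_antisymm
  · exact Finset.sup_le (fun a ha => by
      simpa using ((Set.Finite.mem_toFinset _).1 ha).2)
  · refine (hatom x).2 (fun a ha => ?_)
    exact Finset.le_sup (f := id) ((Set.Finite.mem_toFinset _).2 ha)

/-- atom refinement: get an atom-supported point below / above -/
theorem refineAtom [Finite L] (hatom : ∀ a : L, IsLUB {x : L | IsAtom x ∧ x ≤ a} a)
    (x : L) (p : P) (hp : p ∈ (f x).1) :
    (∃ u, u ≤ p ∧ (u ∈ (f ⊥).1 ∨ ∃ a, IsAtom a ∧ a ≤ x ∧ u ∈ (f a).1)) ∧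
    (∃ v, p ≤ v ∧ (v ∈ (f ⊥).1 ∨ ∃ a, IsAtom a ∧ a ≤ x ∧ v ∈ (f a).1)) := by
  classical
  have := refineFinset f ((Set.toFinite {a : L | IsAtom a ∧ a ≤ x}).toFinset) p
    (by rw [atomsSup hatom x]; exact hp)
  refine ⟨?_, ?_⟩
  · obtain ⟨⟨u, hu1, hu2⟩, -⟩ := this
    exact ⟨u, hu1, hu2.imp id (fun ⟨a, ha, hm⟩ => by
      have := (Set.Finite.mem_toFinset _).1 ha
      exact ⟨a, this.1, this.2, hm⟩)⟩
  · obtain ⟨-, ⟨v, hv1, hv2⟩⟩ := this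
    exact ⟨v, hv1, hv2.imp id (fun ⟨a, ha, hm⟩ => by
      have := (Set.Finite.mem_toFinset _).1 ha
      exact ⟨a, this.1, this.2, hm⟩)⟩

/-- Lemma R: atomic refinement of a betweenness. -/
theorem lemmaR [Finite L] (hatom : ∀ a : L, IsLUB {x : L | IsAtom x ∧ x ≤ a} a)
    (hf : Function.Injective f) {c x y : L} (hc : IsAtom c)
    (h : c ≤ x ⊔ y) (hx : ¬ c ≤ x) (hy : ¬ c ≤ y) :
    ∃ a b : L, IsAtom a ∧ IsAtom b ∧ a ≤ x ∧ b ≤ y ∧ c ≤ a ⊔ b := by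
  obtain ⟨r, hrc, hrb⟩ := Sne f hf hc
  have hr : r ∈ (f (x ⊔ y)).1 := Fmono f h hrc
  rw [map_sup, co_sup_carrier] at hr
  obtain ⟨p, hp, q, hq, hpr, hrq⟩ := hr
  have hrx : r ∉ (f x).1 := fun hm => hx (atomLe f hc hrc hm hrb)
  have hry : r ∉ (f y).1 := fun hm => hy (atomLe f hc hrc hm hrb)
  -- helper: given p-side in f x', q-side in f y' with x'=x,y'=y or swapped
  have key : ∀ x' y' : L, x' = x ∧ y' = y ∨ x' = y ∧ y' = x →
      p ∈ (f x').1 → q ∈ (f y').1 →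
      ∃ a b : L, IsAtom a ∧ IsAtom b ∧ a ≤ x ∧ b ≤ y ∧ c ≤ a ⊔ b := by
    intro x' y' hcase hpx hqy
    obtain ⟨⟨u, hup, hu⟩, -⟩ := refineAtom f hatom x' p hpx
    obtain ⟨-, ⟨v, hqv, hv⟩⟩ := refineAtom f hatom y' q hqy
    have hur : u ≤ r := hup.trans hpr
    have hrv : r ≤ v := hrq.trans hqv
    rcases hu with hub | ⟨a, haA, hax', hua⟩
    · -- u ∈ f ⊥ : r ∈ f (⊥ ⊔ y') = f y'
      exfalso
      have : r ∈ (f (⊥ ⊔ y')).1 := by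
        rw [map_sup, co_sup_carrier]
        exact ⟨u, Or.inl hub, v, by
          rcases hv with h' | ⟨b, hbA, hby', hvb⟩
          · exact Or.inl h'
          · exact Or.inr (Fmono f hby' hvb), hur, hrv⟩
      rw [bot_sup_eq] at this
      rcases hcase with ⟨h1, h2⟩ | ⟨h1, h2⟩
      · exact hry (h2 ▸ this)
      · exact hrx (h2 ▸ this)
    · rcases hv with hvb | ⟨b, hbA, hby', hvb⟩
      · -- v ∈ f ⊥ : r ∈ f (a ⊔ ⊥) = f a ≤ f x'
        exfalso
        have : r ∈ (f (a ⊔ ⊥)).1 := by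
          rw [map_sup, co_sup_carrier]
          exact ⟨u, Or.inl hua, v, Or.inr hvb, hur, hrv⟩
        rw [sup_bot_eq] at this
        have hrx' : r ∈ (f x').1 := Fmono f hax' this
        rcases hcase with ⟨h1, h2⟩ | ⟨h1, h2⟩
        · exact hrx (h1 ▸ hrx')
        · exact hry (h1 ▸ hrx')
      · have hrab : r ∈ (f (a ⊔ b)).1 := by
          rw [map_sup, co_sup_carrier]
          exact ⟨u, Or.inl hua, v, Or.inr hvb, hur, hrv⟩
        have hcab : c ≤ a ⊔ b := atomLe f hc hrc hrab hrb
        rcases hcase with ⟨h1, h2⟩ | ⟨h1, h2⟩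
        · exact ⟨a, b, haA, hbA, h1 ▸ hax', h2 ▸ hby', hcab⟩
        · exact ⟨b, a, hbA, haA, h2 ▸ hby', h1 ▸ hax', sup_comm a b ▸ hcab⟩
  rcases hp with hpx | hpy
  · rcases hq with hqx | hqy
    · exact absurd ((f x).2.out hpx hqx ⟨hpr, hrq⟩) hrx
    · exact key x y (Or.inl ⟨rfl, rfl⟩) hpx hqy
  · rcases hq with hqx | hqy
    · exact key y x (Or.inr ⟨rfl, rfl⟩) hpy hqx
    · exact absurd ((f y).2.out hpy hqy ⟨hpr, hrq⟩) hry


/-- the `down` relation determined by a choice function `ρ`. -/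
def dnR (f : LatticeHom L (Co P)) (ρ : L → P) (c a : L) : Prop :=
  IsAtom a ∧ a ≠ c ∧ ∃ p ∈ (f a).1, p < ρ c

def upR (f : LatticeHom L (Co P)) (ρ : L → P) (c a : L) : Prop :=
  IsAtom a ∧ a ≠ c ∧ ∃ q ∈ (f a).1, ρ c < q

/-- `c` is a "mid" atom: it lies strictly between two other atoms. -/
def MidA (c : L) : Prop :=
  ∃ a b : L, IsAtom a ∧ IsAtom b ∧ a ≠ b ∧ a ≠ c ∧ b ≠ c ∧ c ≤ a ⊔ b

variable (ρ : L → P)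

theorem K1f (hρ : ∀ c : L, IsAtom c → ρ c ∈ (f c).1 \ (f ⊥).1) {c a b : L} (hc : IsAtom c) (ha : IsAtom a) (hb : IsAtom b)
    (hac : a ≠ c) (hbc : b ≠ c) (hle : c ≤ a ⊔ b) :
    (dnR f ρ c a ∧ upR f ρ c b) ∨ (dnR f ρ c b ∧ upR f ρ c a) := by
  have hrc := hρ c hc
  have h1 : ρ c ∈ (f (a ⊔ b)).1 := Fmono f hle hrc.1
  rw [map_sup, co_sup_carrier] at h1
  obtain ⟨p, hp, q, hq, hpr, hrq⟩ := h1
  have hra : ρ c ∉ (f a).1 := fun hm => hac (atomLeAtom hc ha (atomLe f hc hrc.1 hm hrc.2)).symm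
  have hrb : ρ c ∉ (f b).1 := fun hm => hbc (atomLeAtom hc hb (atomLe f hc hrc.1 hm hrc.2)).symm
  have hpr' : p < ρ c := lt_of_le_of_ne hpr (fun e => by
    subst e; rcases hp with h | h; exact hra h; exact hrb h)
  have hrq' : ρ c < q := lt_of_le_of_ne hrq (fun e => by
    subst e; rcases hq with h | h; exact hra h; exact hrb h)
  rcases hp with hpa | hpb
  · rcases hq with hqa | hqb
    · exact absurd ((f a).2.out hpa hqa ⟨hpr, hrq⟩) hra
    · exact Or.inl ⟨⟨ha, hac, p, hpa, hpr'⟩, ⟨hb, hbc, q, hqb, hrq'⟩⟩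
  · rcases hq with hqa | hqb
    · exact Or.inr ⟨⟨hb, hbc, p, hpb, hpr'⟩, ⟨ha, hac, q, hqa, hrq'⟩⟩
    · exact absurd ((f b).2.out hpb hqb ⟨hpr, hrq⟩) hrb

theorem K1b (hρ : ∀ c : L, IsAtom c → ρ c ∈ (f c).1 \ (f ⊥).1) {c a b : L} (hc : IsAtom c) (hd : dnR f ρ c a) (hu : upR f ρ c b) :
    c ≤ a ⊔ b := by
  obtain ⟨-, -, p, hpa, hpc⟩ := hd
  obtain ⟨-, -, q, hqb, hcq⟩ := hu
  have : ρ c ∈ (f (a ⊔ b)).1 := by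
    rw [map_sup, co_sup_carrier]
    exact ⟨p, Or.inl hpa, q, Or.inr hqb, le_of_lt hpc, le_of_lt hcq⟩
  exact atomLe f hc (hρ c hc).1 this (hρ c hc).2

theorem K3dn (hρ : ∀ c : L, IsAtom c → ρ c ∈ (f c).1 \ (f ⊥).1) {c b : L} (hc : IsAtom c) (hu : upR f ρ c b) :
    ∀ p ∈ (f ⊥).1, ¬ p < ρ c := by
  obtain ⟨hb, hbc, q, hqb, hcq⟩ := hu
  intro p hpb hpc
  have : ρ c ∈ (f (⊥ ⊔ b)).1 := by
    rw [map_sup, co_sup_carrier]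
    exact ⟨p, Or.inl hpb, q, Or.inr hqb, le_of_lt hpc, le_of_lt hcq⟩
  rw [bot_sup_eq] at this
  exact hbc (atomLeAtom hc hb (atomLe f hc (hρ c hc).1 this (hρ c hc).2)).symm

theorem K3up (hρ : ∀ c : L, IsAtom c → ρ c ∈ (f c).1 \ (f ⊥).1) {c b : L} (hc : IsAtom c) (hd : dnR f ρ c b) :
    ∀ p ∈ (f ⊥).1, ¬ ρ c < p := by
  obtain ⟨hb, hbc, q, hqb, hqc⟩ := hd
  intro p hpb hcp
  have : ρ c ∈ (f (b ⊔ ⊥)).1 := by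
    rw [map_sup, co_sup_carrier]
    exact ⟨q, Or.inl hqb, p, Or.inr hpb, le_of_lt hqc, le_of_lt hcp⟩
  rw [sup_bot_eq] at this
  exact hbc (atomLeAtom hc hb (atomLe f hc (hρ c hc).1 this (hρ c hc).2)).symm

theorem atomJIrr {a : L} (ha : IsAtom a) : JIrr a := by
  intro x y hxy
  have hx : x ≤ a := hxy ▸ le_sup_left
  rcases lt_or_eq_of_le hx with h | h
  · right
    rw [hxy, ha.2 x h, bot_sup_eq]
  · exact Or.inl h.symm

/-- a `dn`-neighbour of a mid atom is not mid. -/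
theorem K4dn (hρ : ∀ c : L, IsAtom c → ρ c ∈ (f c).1 \ (f ⊥).1) (hno2 : ¬ ∃ a b : L, JIrr a ∧ JIrr b ∧ DRel a b ∧ DRel b a)
    {c a : L} (hc : IsAtom c) (hwit : ∃ b, upR f ρ c b) (hd : dnR f ρ c a) :
    ¬ MidA a := by
  obtain ⟨b', hub'⟩ := hwit
  obtain ⟨ha, hac, p, hpa, hpc⟩ := hd
  rintro ⟨u, v, hu, hv, huv, hua, hva, hle⟩
  have hpb : p ∉ (f ⊥).1 := fun h => K3dn f ρ hρ hc hub' p h hpc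
  have hpuv : p ∈ (f (u ⊔ v)).1 := Fmono f hle hpa
  rw [map_sup, co_sup_carrier] at hpuv
  obtain ⟨s, hs, t, ht, hsp, hpt⟩ := hpuv
  have hpu : p ∉ (f u).1 := fun h => hua (atomLeAtom ha hu (atomLe f ha hpa h hpb)).symm
  have hpv : p ∉ (f v).1 := fun h => hva (atomLeAtom ha hv (atomLe f ha hpa h hpb)).symm
  have hsp' : s < p := lt_of_le_of_ne hsp (fun e => by
    subst e; rcases hs with h | h; exact hpu h; exact hpv h)
  obtain ⟨w, hw, hwa, hsw⟩ : ∃ w, IsAtom w ∧ a ≠ w ∧ s ∈ (f w).1 := by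
    rcases hs with h | h
    · exact ⟨u, hu, fun e => hua e.symm, h⟩
    · exact ⟨v, hv, fun e => hva e.symm, h⟩
  have hmem : p ∈ (f (w ⊔ c)).1 := by
    rw [map_sup, co_sup_carrier]
    exact ⟨s, Or.inl hsw, ρ c, Or.inr (hρ c hc).1, le_of_lt hsp', le_of_lt hpc⟩
  have hawc : a ≤ w ⊔ c := atomLe f ha hpa hmem hpb
  have hwc : w ≠ c := fun e => by
    subst e
    exact hac (atomLeAtom ha hc (le_of_le_of_eq hawc (sup_idem w)))
  apply hno2
  refine ⟨a, c, atomJIrr ha, atomJIrr hc, ⟨hac, w, ?_, ?_⟩,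
    ⟨fun e => hac e.symm, b', K1b f ρ hρ hc ⟨ha, hac, p, hpa, hpc⟩ hub', ?_⟩⟩
  · rwa [sup_comm]
  · intro y hy hle'
    rw [hc.2 y hy, bot_sup_eq] at hle'
    exact hwa (atomLeAtom ha hw hle')
  · intro y hy hle'
    rw [ha.2 y hy, bot_sup_eq] at hle'
    exact hub'.2.1 (atomLeAtom hc hub'.1 hle').symm

theorem K4up (hρ : ∀ c : L, IsAtom c → ρ c ∈ (f c).1 \ (f ⊥).1) (hno2 : ¬ ∃ a b : L, JIrr a ∧ JIrr b ∧ DRel a b ∧ DRel b a)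
    {c a : L} (hc : IsAtom c) (hwit : ∃ b, dnR f ρ c b) (hu : upR f ρ c a) :
    ¬ MidA a := by
  obtain ⟨b', hdb'⟩ := hwit
  obtain ⟨ha, hac, p, hpa, hcp⟩ := hu
  rintro ⟨u, v, hu', hv, huv, hua, hva, hle⟩
  have hpb : p ∉ (f ⊥).1 := fun h => K3up f ρ hρ hc hdb' p h hcp
  have hpuv : p ∈ (f (u ⊔ v)).1 := Fmono f hle hpa
  rw [map_sup, co_sup_carrier] at hpuv
  obtain ⟨s, hs, t, ht, hsp, hpt⟩ := hpuv
  have hpu : p ∉ (f u).1 := fun h => hua (atomLeAtom ha hu' (atomLe f ha hpa h hpb)).symm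
  have hpv : p ∉ (f v).1 := fun h => hva (atomLeAtom ha hv (atomLe f ha hpa h hpb)).symm
  have hpt' : p < t := lt_of_le_of_ne hpt (fun e => by
    rw [← e] at ht; rcases ht with h | h; exact hpu h; exact hpv h)
  obtain ⟨w, hw, hwa, htw⟩ : ∃ w, IsAtom w ∧ a ≠ w ∧ t ∈ (f w).1 := by
    rcases ht with h | h
    · exact ⟨u, hu', fun e => hua e.symm, h⟩
    · exact ⟨v, hv, fun e => hva e.symm, h⟩
  have hmem : p ∈ (f (c ⊔ w)).1 := by
    rw [map_sup, co_sup_carrier]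
    exact ⟨ρ c, Or.inl (hρ c hc).1, t, Or.inr htw, le_of_lt hcp, le_of_lt hpt'⟩
  have hawc : a ≤ c ⊔ w := atomLe f ha hpa hmem hpb
  have hwc : w ≠ c := fun e =>
    hac (atomLeAtom ha hc (by rw [e, sup_idem] at hawc; exact hawc))
  apply hno2
  refine ⟨a, c, atomJIrr ha, atomJIrr hc, ⟨hac, w, hawc, ?_⟩,
    ⟨fun e => hac e.symm, b',
      (by rw [sup_comm]; exact K1b f ρ hρ hc hdb' ⟨ha, hac, p, hpa, hcp⟩ :
        c ≤ a ⊔ b'), ?_⟩⟩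
  · intro y hy hle'
    rw [hc.2 y hy, bot_sup_eq] at hle'
    exact hwa (atomLeAtom ha hw hle')
  · intro y hy hle'
    rw [ha.2 y hy, bot_sup_eq] at hle'
    exact hdb'.2.1 (atomLeAtom hc hdb'.1 hle').symm


theorem DStruct [Finite L] (hatom : ∀ a : L, IsLUB {x : L | IsAtom x ∧ x ≤ a} a)
    (hf : Function.Injective f) (hρ : ∀ c : L, IsAtom c → ρ c ∈ (f c).1 \ (f ⊥).1)
    {a b : L} (ha : IsAtom a) (hb : IsAtom b) (hD : DRel a b) :
    MidA a ∧ (dnR f ρ a b ∨ upR f ρ a b) ∧ (∃ b', dnR f ρ a b') ∧ (∃ b', upR f ρ a b') := by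
  obtain ⟨hab, x, hax, hmin⟩ := hD
  have hnx : ¬ a ≤ x := by
    have := hmin ⊥ (bot_lt_iff_ne_bot.2 hb.1)
    rwa [bot_sup_eq] at this
  have hnb : ¬ a ≤ b := fun h => hab (atomLeAtom ha hb h)
  obtain ⟨b1, e, hb1, he, hb1b, hex, hle⟩ := lemmaR f hatom hf ha hax hnb hnx
  have hbeq : b1 = b := atomLeAtom hb1 hb hb1b
  subst hbeq
  have hea : e ≠ a := fun h => hnx (h ▸ hex)
  have hbe : b1 ≠ e := fun h => hnx (le_trans (by rw [h, sup_idem] at hle; exact hle) hex)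
  have hba : b1 ≠ a := fun h => hab h.symm
  have hMid : MidA a := ⟨b1, e, hb1, he, hbe, hba, hea, hle⟩
  rcases K1f f ρ hρ ha hb1 he hba hea hle with ⟨h1, h2⟩ | ⟨h1, h2⟩
  · exact ⟨hMid, Or.inl h1, ⟨b1, h1⟩, ⟨e, h2⟩⟩
  · exact ⟨hMid, Or.inr h2, ⟨e, h1⟩, ⟨b1, h2⟩⟩

theorem K5 [Finite L] (hatom : ∀ a : L, IsLUB {x : L | IsAtom x ∧ x ≤ a} a)
    (hf : Function.Injective f) (hρ : ∀ c : L, IsAtom c → ρ c ∈ (f c).1 \ (f ⊥).1)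
    (hno2 : ¬ ∃ a b : L, JIrr a ∧ JIrr b ∧ DRel a b ∧ DRel b a)
    {p0 p1 p2 : L} (h0 : IsAtom p0) (h1 : IsAtom p1) (h2 : IsAtom p2)
    (hD0 : DRel p0 p1) (hD1 : DRel p1 p2) : False := by
  obtain ⟨hM1, -, -, -⟩ := DStruct f ρ hatom hf hρ h1 h2 hD1
  obtain ⟨-, hside, hdnw, hupw⟩ := DStruct f ρ hatom hf hρ h0 h1 hD0
  rcases hside with h | h
  · exact K4dn f ρ hρ hno2 h0 hupw h hM1
  · exact K4up f ρ hρ hno2 h0 hdnw h hM1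

end Hom

theorem jirrSup {L : Type*} [Lattice L] [OrderBot L] {p : L} (hp : JIrr p) :
    ∀ T : Finset L, p = T.sup id → p = ⊥ ∨ ∃ a ∈ T, p = a := by
  classical
  intro T
  induction T using Finset.induction_on with
  | empty => intro h; exact Or.inl (by simpa using h)
  | @insert a T ha ih =>
    intro h
    rw [Finset.sup_insert] at h
    rcases hp _ _ h with h' | h'
    · exact Or.inr ⟨a, Finset.mem_insert_self a T, h'⟩
    · rcases ih h' with h'' | ⟨b, hb, he⟩
      · exact Or.inl h''
      · exact Or.inr ⟨b, Finset.mem_insert_of_mem hb, he⟩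

theorem jirrAtom {L : Type*} [Lattice L] [OrderBot L] [Finite L]
    (hatom : ∀ a : L, IsLUB {x : L | IsAtom x ∧ x ≤ a} a)
    {q : L} (hq : JIrr q) (hqb : q ≠ ⊥) : IsAtom q := by
  classical
  rcases jirrSup hq _ (atomsSup hatom q).symm with h | ⟨a, ha, he⟩
  · exact absurd h hqb
  · have := (Set.Finite.mem_toFinset _).1 ha
    exact he ▸ this.1

theorem drelNeBot {L : Type*} [Lattice L] [OrderBot L] {u v : L} (h : DRel u v) : u ≠ ⊥ := by
  obtain ⟨huv, x, hle, hmin⟩ := h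
  intro hbot
  exact hmin ⊥ (bot_lt_iff_ne_bot.2 (fun e => huv (hbot.trans e.symm))) (by rw [hbot]; exact bot_le)

section QDef
variable {L : Type*} [Lattice L] [OrderBot L]

/-- the target poset of length at most 2 -/
def QT (L : Type*) [Lattice L] [OrderBot L] : Type _ :=
  {c : L // IsAtom c ∧ MidA c} ⊕ ({a : L // IsAtom a ∧ ¬ MidA a} × Bool)

def qrank : QT L → ℕ
  | .inl _ => 1
  | .inr (_, true) => 2
  | .inr (_, false) => 0

def qatom : QT L → L
  | .inl c => c.1
  | .inr (a, _) => a.1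

theorem qrank_lt3 : ∀ x : QT L, qrank x < 3 := by
  rintro (c | ⟨a, (_ | _)⟩) <;> simp [qrank]

@[simp] theorem qatom_inl (c : {c : L // IsAtom c ∧ MidA c}) :
    qatom (Sum.inl c : QT L) = c.1 := rfl

@[simp] theorem qatom_inr (a : {a : L // IsAtom a ∧ ¬ MidA a}) (i : Bool) :
    qatom (Sum.inr (a, i) : QT L) = a.1 := rfl

def qslt (dn up : L → L → Prop) : QT L → QT L → Prop
  | .inr (a, false), .inl c => dn c.1 a.1
  | .inl c, .inr (b, true) => up c.1 b.1
  | .inr (a, false), .inr (b, true) => ∃ c : L, (IsAtom c ∧ MidA c) ∧ dn c a.1 ∧ up c b.1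
  | _, _ => False

theorem qslt_rank {dn up : L → L → Prop} :
    ∀ {x y : QT L}, qslt dn up x y → qrank x < qrank y := by
  rintro (c | ⟨a, (_ | _)⟩) (d | ⟨b, (_ | _)⟩) h <;>
    simp only [qslt, qrank] at h ⊢ <;> first | omega | exact h.elim

theorem qslt_trans {dn up : L → L → Prop} :
    ∀ {x y z : QT L}, qslt dn up x y → qslt dn up y z → qslt dn up x z := by
  rintro (c | ⟨a, (_ | _)⟩) (d | ⟨b, (_ | _)⟩) (e | ⟨g, (_ | _)⟩) h1 h2 <;>
    simp only [qslt] at h1 h2 ⊢ <;> first | exact h1.elim | exact h2.elim |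
      exact ⟨d.1, d.2, h1, h2⟩

theorem qslt_mid {dn up : L → L → Prop} :
    ∀ {x y z : QT L}, qslt dn up x y → qslt dn up y z →
      ∃ (c : {c : L // IsAtom c ∧ MidA c}) (a b : {a : L // IsAtom a ∧ ¬ MidA a}),
        y = .inl c ∧ x = .inr (a, false) ∧ z = .inr (b, true) ∧ dn c.1 a.1 ∧ up c.1 b.1 := by
  rintro (c | ⟨a, (_ | _)⟩) (d | ⟨b, (_ | _)⟩) (e | ⟨g, (_ | _)⟩) h1 h2 <;>
    simp only [qslt] at h1 h2 ⊢ <;> first | exact h1.elim | exact h2.elim |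
      exact ⟨d, a, g, rfl, rfl, rfl, h1, h2⟩

def qpo (dn up : L → L → Prop) : PartialOrder (QT L) where
  le x y := x = y ∨ qslt dn up x y
  le_refl x := Or.inl rfl
  le_trans x y z h1 h2 := by
    rcases h1 with rfl | h1
    · exact h2
    · rcases h2 with rfl | h2
      · exact Or.inr h1
      · exact Or.inr (qslt_trans h1 h2)
  le_antisymm x y h1 h2 := by
    rcases h1 with rfl | h1
    · rfl
    · rcases h2 with rfl | h2
      · rfl
      · exact absurd (lt_trans (qslt_rank h1) (qslt_rank h2)) (lt_irrefl _)

end QDef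
end Stmt6A



theorem stmt6.{u} (L : Type u) [Lattice L] [OrderBot L] [Finite L]
    (hatom : ∀ a : L, IsLUB {x : L | IsAtom x ∧ x ≤ a} a)
    (hno2cycle : ¬ ∃ a b : L, JIrr a ∧ JIrr b ∧ DRel a b ∧ DRel b a)
    (hsub : ∃ (P : Type u) (_ : PartialOrder P),
      ∃ f : LatticeHom L (Co P), Function.Injective f) :
    (∃ (Q : Type u) (_ : PartialOrder Q), lengthLE Q 2 ∧
      ∃ f : LatticeHom L (Co Q), Function.Injective f) ∧
    ¬ ∃ (k : ℕ) (p : ℕ → L), 0 < k ∧ (∀ i ≤ k, JIrr (p i)) ∧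
        (∀ i < k, DRel (p i) (p (i + 1))) ∧ p k = p 0 := by
  classical
  obtain ⟨P, iP, f, hf⟩ := hsub
  by_cases hA : ∃ c : L, IsAtom c
  · -- main case: there is an atom
    haveI hPne : Nonempty P := by
      obtain ⟨c, hc⟩ := hA
      obtain ⟨r, -⟩ := Stmt6A.Sne f hf hc
      exact ⟨r⟩
    have hch : ∀ c : L, ∃ r : P, IsAtom c → r ∈ (f c).1 \ (f ⊥).1 := by
      intro c
      by_cases h : IsAtom c
      · obtain ⟨r, hr⟩ := Stmt6A.Sne f hf h
        exact ⟨r, fun _ => hr⟩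
      · exact ⟨Classical.arbitrary P, fun h' => absurd h' h⟩
    choose ρ hρ using hch
    have noCyc : ¬ ∃ (k : ℕ) (p : ℕ → L), 0 < k ∧ (∀ i ≤ k, JIrr (p i)) ∧
        (∀ i < k, DRel (p i) (p (i + 1))) ∧ p k = p 0 := by
      rintro ⟨k, p, hk, hJ, hD, hcyc⟩
      have hat : ∀ i, i < k → IsAtom (p i) := fun i hi =>
        Stmt6A.jirrAtom hatom (hJ i (le_of_lt hi)) (Stmt6A.drelNeBot (hD i hi))
      by_cases hk1 : k = 1
      · subst hk1
        exact (hD 0 (by norm_num)).1 hcyc.symm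
      · have hk2 : 2 ≤ k := by omega
        have h2 : IsAtom (p 2) := by
          rcases eq_or_lt_of_le hk2 with h | h
          · rw [← h] at hcyc
            rw [hcyc]
            exact hat 0 (by omega)
          · exact hat 2 h
        exact Stmt6A.K5 f ρ hatom hf hρ hno2cycle (hat 0 (by omega)) (hat 1 (by omega)) h2
          (hD 0 (by omega)) (hD 1 (by omega))
    refine ⟨?_, noCyc⟩
    letI iQ : PartialOrder (Stmt6A.QT L) := Stmt6A.qpo (Stmt6A.dnR f ρ) (Stmt6A.upR f ρ)
    refine ⟨Stmt6A.QT L, iQ, ?_, ?_⟩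
    · -- length at most 2
      intro C hC
      have hinj : Set.InjOn Stmt6A.qrank (C : Set (Stmt6A.QT L)) := by
        intro x hx y hy hxy
        by_contra hne
        rcases hC hx hy hne with h | h
        · rcases (h : x = y ∨ Stmt6A.qslt _ _ x y) with rfl | h'
          · exact hne rfl
          · exact (Stmt6A.qslt_rank h').ne hxy
        · rcases (h : y = x ∨ Stmt6A.qslt _ _ y x) with rfl | h'
          · exact hne rfl
          · exact (Stmt6A.qslt_rank h').ne hxy.symm
      calc C.card = (C.image Stmt6A.qrank).card := (Finset.card_image_of_injOn hinj).symm
        _ ≤ (Finset.range 3).card := Finset.card_le_card (fun n hn => by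
            obtain ⟨x, -, rfl⟩ := Finset.mem_image.1 hn
            exact Finset.mem_range.2 (Stmt6A.qrank_lt3 x))
        _ ≤ 2 + 1 := by rw [Finset.card_range]
    · -- the lattice embedding
      have gconv : ∀ x : L, OrdConnected {q : Stmt6A.QT L | Stmt6A.qatom q ≤ x} := by
        intro x
        constructor
        intro u hu v hv z hz
        rcases (hz.1 : u = z ∨ Stmt6A.qslt _ _ u z) with rfl | h1
        · exact hu
        rcases (hz.2 : z = v ∨ Stmt6A.qslt _ _ z v) with rfl | h2
        · exact hv
        obtain ⟨c, a, b, rfl, rfl, rfl, hdn, hup⟩ := Stmt6A.qslt_mid h1 h2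
        have hcab : c.1 ≤ a.1 ⊔ b.1 := Stmt6A.K1b f ρ hρ c.2.1 hdn hup
        exact le_trans hcab (sup_le hu hv)
      set g : L → Co (Stmt6A.QT L) := fun x => ⟨{q | Stmt6A.qatom q ≤ x}, gconv x⟩ with hg
      have hgsup : ∀ x y : L, g (x ⊔ y) = g x ⊔ g y := by
        intro x y
        apply Subtype.ext
        rw [Stmt6A.co_sup_carrier]
        apply Set.Subset.antisymm
        · intro z hz
          by_cases hx : Stmt6A.qatom z ≤ x
          · exact ⟨z, Or.inl hx, z, Or.inl hx, le_refl z, le_refl z⟩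
          by_cases hy : Stmt6A.qatom z ≤ y
          · exact ⟨z, Or.inr hy, z, Or.inr hy, le_refl z, le_refl z⟩
          rcases z with c | ⟨w, i⟩
          · obtain ⟨a, b, ha, hb, hax, hby, hab⟩ :=
              Stmt6A.lemmaR f hatom hf c.2.1 hz hx hy
            have hna : a ≠ c.1 := fun e => hx (by simpa [← e] using hax)
            have hnb : b ≠ c.1 := fun e => hy (by simpa [← e] using hby)
            rcases Stmt6A.K1f f ρ hρ c.2.1 ha hb hna hnb hab with ⟨h1, h2⟩ | ⟨h1, h2⟩
            · exact ⟨Sum.inr (⟨a, ha, Stmt6A.K4dn f ρ hρ hno2cycle c.2.1 ⟨b, h2⟩ h1⟩, false),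
                Or.inl hax,
                Sum.inr (⟨b, hb, Stmt6A.K4up f ρ hρ hno2cycle c.2.1 ⟨a, h1⟩ h2⟩, true),
                Or.inr hby, Or.inr h1, Or.inr h2⟩
            · exact ⟨Sum.inr (⟨b, hb, Stmt6A.K4dn f ρ hρ hno2cycle c.2.1 ⟨a, h2⟩ h1⟩, false),
                Or.inr hby,
                Sum.inr (⟨a, ha, Stmt6A.K4up f ρ hρ hno2cycle c.2.1 ⟨b, h1⟩ h2⟩, true),
                Or.inl hax, Or.inr h1, Or.inr h2⟩
          · obtain ⟨a, b, ha, hb, hax, hby, hab⟩ :=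
              Stmt6A.lemmaR f hatom hf w.2.1 hz hx hy
            have hne1 : a ≠ b := fun e =>
              hy (le_trans (by rw [e, sup_idem] at hab; exact hab) hby)
            have hna : a ≠ w.1 := fun e => hx (by simpa [← e] using hax)
            have hnb : b ≠ w.1 := fun e => hy (by simpa [← e] using hby)
            exact absurd ⟨a, b, ha, hb, hne1, hna, hnb, hab⟩ w.2.2
        · rintro z ⟨p, hp, q, hq, hpz, hzq⟩
          rcases (hpz : p = z ∨ Stmt6A.qslt _ _ p z) with rfl | h1
          · rcases hp with h | h
            · exact le_trans h le_sup_left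
            · exact le_trans h le_sup_right
          rcases (hzq : z = q ∨ Stmt6A.qslt _ _ z q) with rfl | h2
          · rcases hq with h | h
            · exact le_trans h le_sup_left
            · exact le_trans h le_sup_right
          obtain ⟨c, a, b, rfl, rfl, rfl, hdn, hup⟩ := Stmt6A.qslt_mid h1 h2
          have hcab : c.1 ≤ a.1 ⊔ b.1 := Stmt6A.K1b f ρ hρ c.2.1 hdn hup
          have hax : a.1 ≤ x ⊔ y := by
            rcases hp with h | h
            · exact le_trans h le_sup_left
            · exact le_trans h le_sup_right
          have hbx : b.1 ≤ x ⊔ y := by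
            rcases hq with h | h
            · exact le_trans h le_sup_left
            · exact le_trans h le_sup_right
          exact le_trans hcab (sup_le hax hbx)
      have hginf : ∀ x y : L, g (x ⊓ y) = g x ⊓ g y := by
        intro x y
        apply Subtype.ext
        rw [Stmt6A.co_inf_carrier]
        ext q
        exact ⟨fun h => ⟨le_trans h inf_le_left, le_trans h inf_le_right⟩,
          fun h => le_inf h.1 h.2⟩
      refine ⟨⟨⟨g, fun a b => hgsup a b⟩, fun a b => hginf a b⟩, ?_⟩
      intro x y hxy
      have hsets : {q : Stmt6A.QT L | Stmt6A.qatom q ≤ x} = {q | Stmt6A.qatom q ≤ y} :=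
        congrArg Subtype.val hxy
      have hiff : ∀ e : L, IsAtom e → (e ≤ x ↔ e ≤ y) := by
        intro e he
        by_cases hm : Stmt6A.MidA e
        · exact Set.ext_iff.1 hsets (Sum.inl ⟨e, he, hm⟩)
        · exact Set.ext_iff.1 hsets (Sum.inr (⟨e, he, hm⟩, false))
      have hseteq : {a : L | IsAtom a ∧ a ≤ x} = {a | IsAtom a ∧ a ≤ y} :=
        Set.ext fun a => ⟨fun h => ⟨h.1, (hiff a h.1).1 h.2⟩,
          fun h => ⟨h.1, (hiff a h.1).2 h.2⟩⟩
      exact (hatom x).unique (hseteq ▸ hatom y)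
  · -- degenerate case : no atoms, L is trivial
    have hball : ∀ x : L, x = ⊥ := by
      intro x
      have hs : {a : L | IsAtom a ∧ a ≤ x} = ∅ :=
        Set.eq_empty_iff_forall_notMem.2 (fun a ha => hA ⟨a, ha.1⟩)
      have h := hatom x
      rw [hs] at h
      exact le_antisymm (h.2 (fun b hb => hb.elim)) bot_le
    constructor
    · letI iQ : PartialOrder (Stmt6A.QT L) :=
        Stmt6A.qpo (fun _ _ => False) (fun _ _ => False)
      have hE : IsEmpty (Stmt6A.QT L) := ⟨fun q => by
        rcases q with c | ⟨a, i⟩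
        · exact hA ⟨c.1, c.2.1⟩
        · exact hA ⟨a.1, a.2.1⟩⟩
      refine ⟨Stmt6A.QT L, iQ, ?_, ?_⟩
      · intro C hC
        have : C = ∅ := Finset.eq_empty_of_forall_notMem (fun x _ => hE.false x)
        simp [this]
      · refine ⟨⟨⟨fun _ => ⟨∅, Set.ordConnected_empty⟩, fun a b => ?_⟩, fun a b => ?_⟩,
          fun x y _ => (hball x).trans (hball y).symm⟩
        · apply Subtype.ext
          have h := Stmt6A.co_sup_carrier (P := Stmt6A.QT L)
            (⟨∅, Set.ordConnected_empty⟩ : Co (Stmt6A.QT L)) ⟨∅, Set.ordConnected_empty⟩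
          exact (h.trans (by simp)).symm
        · apply Subtype.ext
          have h := Stmt6A.co_inf_carrier (P := Stmt6A.QT L)
            (⟨∅, Set.ordConnected_empty⟩ : Co (Stmt6A.QT L)) ⟨∅, Set.ordConnected_empty⟩
          exact (h.trans (by simp)).symm
    · rintro ⟨k, p, hk, hJ, hD, hcyc⟩
      exact (hD 0 hk).1 ((hball _).trans (hball _).symm)
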